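/- Let (M_t)_{t=0}^T be a martingale on a probability space with respect to a filtration, with M_0 = 0 and increments bounded almost surely by |M_t − M_{t−1}| ≤ A_max for all 1 ≤ t ≤ T, where A_max > 0. Then E[ max_{0 ≤ t ≤ T} (M_t)_+ ] ≤ A_max · sqrt(π T / 2). -/

import Mathlib

open MeasureTheory Finset Real
open scoped ENNReal NNReal

lemma chord_ineq {A s x : ℝ} (hA : 0 < A) (hx : |x| ≤ A) :
    Real.exp (s * x) ≤ Real.cosh (s * A) + Real.sinh (s * A) / A * x := by
  obtain ⟨h1, h2⟩ := abs_le.mp hx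
  have ha : (0:ℝ) ≤ (A + x) / (2 * A) := div_nonneg (by linarith) (by linarith)
  have hb : (0:ℝ) ≤ (A - x) / (2 * A) := div_nonneg (by linarith) (by linarith)
  have hab : (A + x) / (2 * A) + (A - x) / (2 * A) = 1 := by field_simp; ring
  have key := convexOn_exp.2 (Set.mem_univ (s * A)) (Set.mem_univ (-(s * A))) ha hb hab
  rw [smul_eq_mul, smul_eq_mul] at key
  have harg : (A + x) / (2 * A) * (s * A) + (A - x) / (2 * A) * (-(s * A)) = s * x := by
    field_simp; ring
  rw [harg] at key
  refine key.trans_eq ?_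
  rw [Real.cosh_eq, Real.sinh_eq]
  field_simp
  have hA0 : A * A⁻¹ = 1 := mul_inv_cancel₀ hA.ne'
  linear_combination (Real.exp (A * s) * x - x * Real.exp (-(A * s)) + A * Real.exp (A * s)
    + A * Real.exp (-(A * s))) * hA0

lemma abs_bound_aux {Ω : Type*} {m : MeasurableSpace Ω} {μ : Measure Ω}
    (T : ℕ) (M : ℕ → Ω → ℝ)
    (h0 : ∀ ω, M 0 ω = 0) {Amax : ℝ} (hA : 0 < Amax)
    (hinc : ∀ t, 1 ≤ t → t ≤ T → ∀ᵐ ω ∂μ, |M t ω - M (t - 1) ω| ≤ Amax) (k : ℕ) :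
    ∀ᵐ ω ∂μ, |M (min k T) ω| ≤ (min k T : ℕ) * Amax := by
  induction k with
  | zero =>
    refine .of_forall fun ω => ?_
    simp [h0]
  | succ k ih =>
    rcases le_or_gt (k+1) T with hk | hk
    · have e1 : min (k+1) T = k+1 := min_eq_left hk
      have e2 : min k T = k := min_eq_left (by omega)
      have hi := hinc (k+1) (by omega) hk
      rw [e1]; rw [e2] at ih
      filter_upwards [ih, hi] with ω hb1 hb2
      have h3 : |M (k+1) ω| ≤ |M k ω| + |M (k+1) ω - M k ω| := by
        calc |M (k+1) ω| = |M k ω + (M (k+1) ω - M k ω)| := by ring_nf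
          _ ≤ |M k ω| + |M (k+1) ω - M k ω| := abs_add_le _ _
      have hc : ((k:ℝ)+1) * Amax = (k:ℝ) * Amax + Amax := by ring
      push_cast
      rw [hc]
      exact h3.trans (add_le_add hb1 hb2)
    · have e1 : min (k+1) T = min k T := by omega
      rw [e1]; exact ih

lemma tail_bound_aux {Ω : Type*} {m : MeasurableSpace Ω} (μ : Measure Ω)
    [IsProbabilityMeasure μ] (ℱ : Filtration ℕ m)
    (T : ℕ) (M : ℕ → Ω → ℝ)
    (hM : Martingale M ℱ μ)
    (h0 : ∀ ω, M 0 ω = 0)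
    (Amax : ℝ) (hA : 0 < Amax)
    (hinc : ∀ t, 1 ≤ t → t ≤ T → ∀ᵐ ω ∂μ, |M t ω - M (t - 1) ω| ≤ Amax)
    {s lam : ℝ} (hs : 0 < s) (hlam : 0 < lam) :
    (μ {ω | lam < (Finset.range (T + 1)).sup' Finset.nonempty_range_add_one
        fun t => max (M t ω) 0}).toReal
      ≤ Real.cosh (s * Amax) ^ T * Real.exp (-(s * lam)) := by
  classical
  set g : ℕ → Ω → ℝ := fun k ω => Real.exp (s * M (min k T) ω) with hgdef
  set D : ℕ → Ω → ℝ := fun k => M (min (k+1) T) - M (min k T) with hDdef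
  -- increments of the stopped process are bounded
  have hDbd : ∀ k, ∀ᵐ ω ∂μ, |D k ω| ≤ Amax := by
    intro k
    rcases le_or_gt (k+1) T with hk | hk
    · have e1 : min (k+1) T = k+1 := min_eq_left hk
      have e2 : min k T = k := min_eq_left (by omega)
      simp only [hDdef, e1, e2, Pi.sub_apply]
      exact hinc (k+1) (by omega) hk
    · have e1 : min (k+1) T = min k T := by omega
      refine .of_forall fun ω => ?_
      simp [hDdef, e1, hA.le]
  -- integrability of D
  have hDint : ∀ k, Integrable (D k) μ :=
    fun k => (hM.integrable _).sub (hM.integrable _)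
  -- strong measurability of g k wrt ℱ k
  have hSM : ∀ k, StronglyMeasurable[ℱ k] (g k) := by
    intro k
    exact Real.continuous_exp.comp_stronglyMeasurable
      (((hM.stronglyAdapted (min k T)).mono (ℱ.mono (min_le_left _ _))).const_mul s)
  -- integrability of g k
  have hgint : ∀ k, Integrable (g k) μ := by
    intro k
    refine (integrable_const (Real.exp (s * (T * Amax)))).mono'
      ((hSM k).mono (ℱ.le k)).aestronglyMeasurable ?_
    filter_upwards [abs_bound_aux T M h0 hA hinc k] with ω hω
    rw [hgdef]
    simp only [Real.norm_eq_abs, Real.abs_exp]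
    refine Real.exp_le_exp.2 ?_
    have h1 : M (min k T) ω ≤ (min k T : ℕ) * Amax := (abs_le.1 hω).2
    have h2 : ((min k T : ℕ) : ℝ) ≤ (T:ℝ) := by exact_mod_cast min_le_right k T
    have h3 : M (min k T) ω ≤ (T:ℝ) * Amax :=
      h1.trans (mul_le_mul_of_nonneg_right h2 hA.le)
    exact mul_le_mul_of_nonneg_left h3 hs.le
  -- integrability of exp (s * D k)
  have hexpDint : ∀ k, Integrable (fun ω => Real.exp (s * D k ω)) μ := by
    intro k
    have hDm : StronglyMeasurable (D k) :=
      ((hM.stronglyAdapted _).mono (ℱ.le _)).sub ((hM.stronglyAdapted _).mono (ℱ.le _))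
    refine (integrable_const (Real.exp (s * Amax))).mono'
      (Real.continuous_exp.comp_stronglyMeasurable (hDm.const_mul s)).aestronglyMeasurable ?_
    filter_upwards [hDbd k] with ω hω
    simp only [Real.norm_eq_abs, Real.abs_exp]
    refine Real.exp_le_exp.2 ?_
    nlinarith [(abs_le.1 hω).2]
  -- conditional expectation of the increment vanishes
  have hDcond : ∀ k, μ[D k|ℱ k] =ᵐ[μ] 0 := by
    intro k
    have h2 : μ[M (min k T)|ℱ k] = M (min k T) :=
      condExp_of_stronglyMeasurable (ℱ.le k)
        ((hM.stronglyAdapted _).mono (ℱ.mono (min_le_left _ _))) (hM.integrable _)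
    have h1 : μ[M (min (k+1) T)|ℱ k] =ᵐ[μ] M (min k T) := by
      rcases le_or_gt (k+1) T with hk | hk
      · have e1 : min (k+1) T = k+1 := min_eq_left hk
        have e2 : min k T = k := min_eq_left (by omega)
        rw [e1, e2]
        exact hM.condExp_ae_eq (Nat.le_succ k)
      · have e1 : min (k+1) T = min k T := by omega
        rw [e1, h2]
    have hsub := condExp_sub (μ := μ) (m := ℱ k)
      (hM.integrable (min (k+1) T)) (hM.integrable (min k T))
    refine hsub.trans ?_
    filter_upwards [h1] with ω hω
    simp [hω, h2]
  -- conditional mgf of the increment: between 1 and cosh (s * Amax)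
  have hGle : ∀ k, μ[(fun ω => Real.exp (s * D k ω))|ℱ k]
      ≤ᵐ[μ] fun _ => Real.cosh (s * Amax) := by
    intro k
    have hlin_int : Integrable
        ((fun _ => Real.cosh (s * Amax)) + (Real.sinh (s * Amax) / Amax) • D k) μ :=
      (integrable_const _).add ((hDint k).smul _)
    have hmono := condExp_mono (m := ℱ k) (hexpDint k) hlin_int ?_
    · have hadd := condExp_add (μ := μ) (m := ℱ k)
        (integrable_const (Real.cosh (s * Amax))) ((hDint k).smul (Real.sinh (s * Amax) / Amax))
      have hsmul := condExp_smul (μ := μ) (m := ℱ k) (Real.sinh (s * Amax) / Amax) (D k)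
      have hconst : μ[(fun _ => Real.cosh (s * Amax)) + (Real.sinh (s * Amax) / Amax) • D k|ℱ k]
          =ᵐ[μ] fun _ => Real.cosh (s * Amax) := by
        refine hadd.trans ?_
        filter_upwards [hsmul, hDcond k] with ω h1 h2
        simp only [Pi.add_apply, condExp_const (ℱ.le k)]
        rw [h1]
        simp [h2]
      exact hmono.trans hconst.le
    · filter_upwards [hDbd k] with ω hω
      simpa using chord_ineq hA hω (s := s)
  have hGge : ∀ k, (fun _ => (1:ℝ)) ≤ᵐ[μ] μ[(fun ω => Real.exp (s * D k ω))|ℱ k] := by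
    intro k
    have hlin_int : Integrable ((fun _ => (1:ℝ)) + s • D k) μ :=
      (integrable_const _).add ((hDint k).smul _)
    have hmono := condExp_mono (m := ℱ k) hlin_int (hexpDint k) ?_
    · have hadd := condExp_add (μ := μ) (m := ℱ k)
        (integrable_const (1:ℝ)) ((hDint k).smul s)
      have hsmul := condExp_smul (μ := μ) (m := ℱ k) s (D k)
      have hconst : μ[(fun _ => (1:ℝ)) + s • D k|ℱ k] =ᵐ[μ] fun _ => (1:ℝ) := by
        refine hadd.trans ?_
        filter_upwards [hsmul, hDcond k] with ω h1 h2
        simp only [Pi.add_apply, condExp_const (ℱ.le k)]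
        rw [h1]
        simp [h2]
      exact hconst.symm.le.trans hmono
    · refine .of_forall fun ω => ?_
      simp only [Pi.add_apply, Pi.smul_apply, smul_eq_mul]
      linarith [Real.add_one_le_exp (s * D k ω)]
  -- pull-out property
  have hpull : ∀ k, μ[g (k+1)|ℱ k]
      =ᵐ[μ] g k * μ[(fun ω => Real.exp (s * D k ω))|ℱ k] := by
    intro k
    have hsplit : g (k+1) = g k * fun ω => Real.exp (s * D k ω) := by
      funext ω
      simp only [hgdef, hDdef, Pi.mul_apply, Pi.sub_apply, ← Real.exp_add]
      congr 1
      ring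
    rw [hsplit]
    exact condExp_mul_of_stronglyMeasurable_left (hSM k)
      (by rw [← hsplit]; exact hgint (k+1)) (hexpDint k)
  -- mgf bound by induction
  have hmgf : ∀ k, ∫ ω, g k ω ∂μ ≤ Real.cosh (s * Amax) ^ k := by
    intro k
    induction k with
    | zero =>
      simp only [hgdef, Nat.zero_min, h0, mul_zero, Real.exp_zero, pow_zero]
      simp
    | succ k ih =>
      have hstep : ∫ ω, g (k+1) ω ∂μ ≤ Real.cosh (s * Amax) * ∫ ω, g k ω ∂μ := by
        rw [← integral_condExp (f := g (k+1)) (ℱ.le k)]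
        rw [integral_congr_ae (hpull k)]
        have hint1 : Integrable (g k * μ[(fun ω => Real.exp (s * D k ω))|ℱ k]) μ :=
          integrable_condExp.congr (hpull k)
        have hint2 : Integrable (fun ω => Real.cosh (s * Amax) * g k ω) μ :=
          (hgint k).const_mul _
        calc ∫ ω, (g k * μ[(fun ω => Real.exp (s * D k ω))|ℱ k]) ω ∂μ
            ≤ ∫ ω, Real.cosh (s * Amax) * g k ω ∂μ := by
              refine integral_mono_ae hint1 hint2 ?_
              filter_upwards [hGle k] with ω hω
              simp only [Pi.mul_apply]
              have hg0 : 0 ≤ g k ω := by rw [hgdef]; positivity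
              calc g k ω * (μ[(fun ω => Real.exp (s * D k ω))|ℱ k]) ω
                  ≤ g k ω * Real.cosh (s * Amax) := mul_le_mul_of_nonneg_left hω hg0
                _ = Real.cosh (s * Amax) * g k ω := mul_comm _ _
          _ = Real.cosh (s * Amax) * ∫ ω, g k ω ∂μ := integral_const_mul _ _
      refine hstep.trans ?_
      rw [pow_succ, mul_comm (Real.cosh (s * Amax) ^ k)]
      exact mul_le_mul_of_nonneg_left ih (Real.cosh_pos _).le
  -- submartingale
  have hgnn : (0 : ℕ → Ω → ℝ) ≤ g := by
    intro k ω
    rw [hgdef]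
    positivity
  have hsub : Submartingale g ℱ μ := by
    refine submartingale_nat (fun k => hSM k) hgint fun i => ?_
    filter_upwards [hpull i, hGge i] with ω h1 h2
    rw [h1]
    have hg0 : 0 ≤ g i ω := hgnn i ω
    calc g i ω = g i ω * 1 := (mul_one _).symm
      _ ≤ g i ω * (μ[(fun ω => Real.exp (s * D i ω))|ℱ i]) ω :=
        mul_le_mul_of_nonneg_left h2 hg0
      _ = (g i * μ[(fun ω => Real.exp (s * D i ω))|ℱ i]) ω := rfl
  -- Doob's maximal inequality
  set ε : NNReal := ⟨Real.exp (s * lam), (Real.exp_pos _).le⟩ with hε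
  have hdoob := maximal_ineq hsub hgnn (ε := ε) T
  set S : Set Ω :=
    {ω | (ε : ℝ) ≤ (Finset.range (T + 1)).sup' Finset.nonempty_range_add_one fun k => g k ω}
    with hS
  have hsetint : ∫ ω in S, g T ω ∂μ ≤ ∫ ω, g T ω ∂μ :=
    setIntegral_le_integral (hgint T) (.of_forall fun ω => hgnn T ω)
  have hsubset : {ω | lam < (Finset.range (T + 1)).sup' Finset.nonempty_range_add_one
      fun t => max (M t ω) 0} ⊆ S := by
    intro ω hω
    simp only [Set.mem_setOf_eq] at hω
    obtain ⟨t, ht, hlt⟩ := (Finset.lt_sup'_iff _).1 hω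
    have htT : t ≤ T := by simpa [Nat.lt_succ_iff] using Finset.mem_range.1 ht
    have hMt : lam < M t ω := by
      rcases lt_max_iff.1 hlt with h | h
      · exact h
      · exact absurd h (not_lt.2 hlam.le)
    rw [hS]
    refine Set.mem_setOf_eq ▸ le_trans ?_ (Finset.le_sup' (fun k => g k ω) ht)
    show Real.exp (s * lam) ≤ g t ω
    rw [hgdef]
    simp only [min_eq_left htT]
    exact Real.exp_le_exp.2 (mul_le_mul_of_nonneg_left hMt.le hs.le)
  have hcosh_nn : (0:ℝ) ≤ Real.cosh (s * Amax) ^ T := (pow_pos (Real.cosh_pos _) T).le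
  have h5 : (ε : ℝ≥0∞) * μ {ω | lam < (Finset.range (T + 1)).sup' Finset.nonempty_range_add_one
      fun t => max (M t ω) 0} ≤ ENNReal.ofReal (Real.cosh (s * Amax) ^ T) := by
    calc (ε : ℝ≥0∞) * μ _ ≤ (ε : ℝ≥0∞) * μ S :=
          mul_le_mul_right (measure_mono hsubset) _
      _ ≤ ENNReal.ofReal (∫ ω in S, g T ω ∂μ) := by
          rw [← smul_eq_mul, ← ENNReal.smul_def]
          exact hdoob
      _ ≤ ENNReal.ofReal (Real.cosh (s * Amax) ^ T) :=
          ENNReal.ofReal_le_ofReal (hsetint.trans (hmgf T))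
  have h6 : (ε : ℝ) * (μ {ω | lam < (Finset.range (T + 1)).sup' Finset.nonempty_range_add_one
      fun t => max (M t ω) 0}).toReal ≤ Real.cosh (s * Amax) ^ T := by
    have := ENNReal.toReal_mono (by simp) h5
    rwa [ENNReal.toReal_mul, ENNReal.coe_toReal, ENNReal.toReal_ofReal hcosh_nn] at this
  have hεeq : (ε : ℝ) = Real.exp (s * lam) := rfl
  rw [hεeq] at h6
  have hepos : (0:ℝ) < Real.exp (s * lam) := Real.exp_pos _
  rw [Real.exp_neg]
  calc (μ {ω | lam < (Finset.range (T + 1)).sup' Finset.nonempty_range_add_one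
        fun t => max (M t ω) 0}).toReal
      = (Real.exp (s * lam) * (μ {ω | lam < (Finset.range (T + 1)).sup'
          Finset.nonempty_range_add_one fun t => max (M t ω) 0}).toReal) *
          (Real.exp (s * lam))⁻¹ := by field_simp
    _ ≤ Real.cosh (s * Amax) ^ T * (Real.exp (s * lam))⁻¹ :=
        mul_le_mul_of_nonneg_right h6 (inv_nonneg.2 hepos.le)

/-- expected maximum of a bounded-increment martingale.  If `(M_t)_{t=0}^T`
is a martingale with `M_0 = 0` and `|M_t − M_{t−1}| ≤ A_max` a.s. for `1 ≤ t ≤ T`, then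
`E[max_{0 ≤ t ≤ T} (M_t)₊] ≤ A_max √(π T / 2)`. -/
theorem stmt14 {Ω : Type*} {m : MeasurableSpace Ω} (μ : Measure Ω)
    [IsProbabilityMeasure μ] (ℱ : Filtration ℕ m)
    (T : ℕ) (M : ℕ → Ω → ℝ)
    (hM : Martingale M ℱ μ)
    (h0 : ∀ ω, M 0 ω = 0)
    (Amax : ℝ) (hA : 0 < Amax)
    (hinc : ∀ t, 1 ≤ t → t ≤ T → ∀ᵐ ω ∂μ, |M t ω - M (t - 1) ω| ≤ Amax) :
    (∫ ω, ((Finset.range (T + 1)).sup' (by simp) fun t => max (M t ω) 0) ∂μ)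
      ≤ Amax * Real.sqrt (Real.pi * T / 2) := by
  rcases Nat.eq_zero_or_pos T with hT | hT
  · subst hT
    have hzero : ∀ ω, ((Finset.range (0 + 1)).sup'
        (by simp : (Finset.range (0+1)).Nonempty) fun t => max (M t ω) 0) = 0 := fun ω => by
      simp [h0]
    have h1 : (∫ ω, ((Finset.range (0 + 1)).sup' (by simp) fun t => max (M t ω) 0) ∂μ) = 0 := by
      simp [h0]
    rw [h1]
    positivity
  · have hT' : (0:ℝ) < (T:ℝ) := by exact_mod_cast hT
    have hT0 : (T:ℝ) ≠ 0 := hT'.ne'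
    have hA0 : Amax ≠ 0 := hA.ne'
    have hXmeas : Measurable fun ω => (Finset.range (T + 1)).sup' Finset.nonempty_range_add_one
        fun t => max (M t ω) 0 :=
      Finset.measurable_range_sup'' fun t _ =>
        (((hM.stronglyAdapted t).mono (ℱ.le t)).measurable).max measurable_const
    have hXnn : ∀ ω, 0 ≤ (Finset.range (T + 1)).sup' Finset.nonempty_range_add_one
        fun t => max (M t ω) 0 := fun ω =>
      le_trans (le_max_right (M 0 ω) 0)
        (Finset.le_sup' (fun t => max (M t ω) 0) (Finset.mem_range.2 (Nat.succ_pos T)))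
    have hXbd : ∀ᵐ ω ∂μ, ((Finset.range (T + 1)).sup' Finset.nonempty_range_add_one
        fun t => max (M t ω) 0) ≤ T * Amax := by
      filter_upwards [ae_all_iff.2 (abs_bound_aux T M h0 hA hinc)] with ω hω
      refine Finset.sup'_le _ _ fun t ht => ?_
      have htT : t ≤ T := by simpa [Nat.lt_succ_iff] using Finset.mem_range.1 ht
      have h1 := hω t
      rw [min_eq_left htT] at h1
      have h2 : ((t:ℕ):ℝ) ≤ (T:ℝ) := by exact_mod_cast htT
      have h3 : M t ω ≤ (T:ℝ) * Amax :=
        (abs_le.1 h1).2.trans (mul_le_mul_of_nonneg_right h2 hA.le)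
      exact max_le h3 (by positivity)
    have hXint : Integrable (fun ω => (Finset.range (T + 1)).sup' Finset.nonempty_range_add_one
        fun t => max (M t ω) 0) μ := by
      refine (integrable_const ((T:ℝ) * Amax)).mono' hXmeas.aestronglyMeasurable ?_
      filter_upwards [hXbd] with ω h1
      rw [Real.norm_eq_abs, abs_of_nonneg (hXnn ω)]
      exact h1
    calc (∫ ω, ((Finset.range (T + 1)).sup' (by simp) fun t => max (M t ω) 0) ∂μ)
        = ∫ t in Set.Ioi (0:ℝ), (μ {a | t < (Finset.range (T + 1)).sup'
            Finset.nonempty_range_add_one fun k => max (M k a) 0}).toReal :=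
          hXint.integral_eq_integral_meas_lt (.of_forall hXnn)
      _ ≤ ∫ t in Set.Ioi (0:ℝ), Real.exp (-(1/(2 * T * Amax^2)) * t^2) := by
          refine integral_mono_of_nonneg (.of_forall fun t => ENNReal.toReal_nonneg)
            ((integrable_exp_neg_mul_sq (by positivity)).integrableOn) ?_
          rw [Filter.EventuallyLE, ae_restrict_iff' measurableSet_Ioi]
          refine .of_forall fun lam hlam => ?_
          have hlam' : (0:ℝ) < lam := Set.mem_Ioi.1 hlam
          have hs : 0 < lam / (T * Amax^2) := by positivity
          have htail := tail_bound_aux μ ℱ T M hM h0 Amax hA hinc hs hlam'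
          refine htail.trans ?_
          have h1 : Real.cosh (lam / (T * Amax^2) * Amax) ^ T
              ≤ Real.exp ((lam / (T * Amax^2) * Amax)^2 / 2) ^ T :=
            pow_le_pow_left₀ (Real.cosh_pos _).le (Real.cosh_le_exp_half_sq _) T
          calc Real.cosh (lam / (T * Amax^2) * Amax) ^ T
                * Real.exp (-(lam / (T * Amax^2) * lam))
              ≤ Real.exp ((lam / (T * Amax^2) * Amax)^2 / 2) ^ T
                * Real.exp (-(lam / (T * Amax^2) * lam)) :=
                mul_le_mul_of_nonneg_right h1 (Real.exp_pos _).le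
            _ = Real.exp ((T:ℝ) * ((lam / (T * Amax^2) * Amax)^2 / 2)
                  + -(lam / (T * Amax^2) * lam)) := by
                rw [← Real.exp_nat_mul, ← Real.exp_add]
            _ ≤ Real.exp (-(1/(2 * T * Amax^2)) * lam^2) := by
                refine Real.exp_le_exp.2 (le_of_eq ?_)
                field_simp
                ring
      _ = Amax * Real.sqrt (Real.pi * T / 2) := by
          rw [integral_gaussian_Ioi]
          have h2 : Real.pi / (1/(2 * T * Amax^2)) = (2*Amax)^2 * (Real.pi * T / 2) := by
            field_simp
          rw [h2, Real.sqrt_mul (by positivity), Real.sqrt_sq (by positivity)]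
          ring
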